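/- arXiv:1908.11360 — 3 statements merged into one kernel-verified Lean document; each statement's English description precedes it below -/
import Mathlib

section
/- (eucl_i)-Elimination: every labelled sequent Λ derivable in G3Ldm_n^m + PR is derivable in G3Ldm_n^m + PR without any use of the rules (eucl_i), i ∈ Ag. -/
namespace Stit

/-- Formulas of the language `L^m` (negation normal form), with agents `Fin m`
and propositional variables indexed by `ℕ`. -/
inductive Fml (m : ℕ) : Type
  | pos : ℕ → Fml m                  -- p
  | neg : ℕ → Fml m                  -- p̄
  | and : Fml m → Fml m → Fml m      -- φ ∧ ψ
  | or  : Fml m → Fml m → Fml m      -- φ ∨ ψ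
  | box : Fml m → Fml m              -- □φ
  | dia : Fml m → Fml m              -- ◇φ
  | ag  : Fin m → Fml m → Fml m      -- [i]φ
  | dag : Fin m → Fml m → Fml m      -- ⟨i⟩φ

namespace Fml

/-- Negation `φ̄`: replace every connective/modality by its dual and swap `p` with `p̄`. -/
def negF {m : ℕ} : Fml m → Fml m
  | pos p => neg p
  | neg p => pos p
  | and φ ψ => or φ.negF ψ.negF
  | or φ ψ => and φ.negF ψ.negF
  | box φ => dia φ.negF
  | dia φ => box φ.negF
  | ag i φ => dag i φ.negF
  | dag i φ => ag i φ.negF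

/-- `φ → ψ` abbreviates `φ̄ ∨ ψ`. -/
def impF {m : ℕ} (φ ψ : Fml m) : Fml m := or φ.negF ψ

end Fml

/-- `f 0 ∧ f 1 ∧ ⋯ ∧ f k` (left-associated). -/
def conjUpTo {m : ℕ} (f : ℕ → Fml m) : ℕ → Fml m
  | 0 => f 0
  | k+1 => Fml.and (conjUpTo f k) (f (k+1))

/-- `f 0 ∨ f 1 ∨ ⋯ ∨ f k` (left-associated). -/
def disjUpTo {m : ℕ} (f : ℕ → Fml m) : ℕ → Fml m
  | 0 => f 0
  | k+1 => Fml.or (disjUpTo f k) (f (k+1))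

/-- `(f 0)̄ ∧ ((f 1)̄ ∧ ⋯ ((f (j-1))̄ ∧ base))`. -/
def prefNegConj {m : ℕ} (f : ℕ → Fml m) : ℕ → Fml m → Fml m
  | 0, base => base
  | j+1, base => prefNegConj f j (Fml.and (f j).negF base)

/-- The antecedent `◇[i]φ_0 ∧ ◇(φ̄_0 ∧ [i]φ_1) ∧ ⋯ ∧ ◇(φ̄_0 ∧ ⋯ ∧ φ̄_{n'-1} ∧ [i]φ_{n'})`
of the (n'+1)-choice axiom. -/
def apcAnte {m : ℕ} (i : Fin m) (f : ℕ → Fml m) (n' : ℕ) : Fml m :=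
  conjUpTo (fun j => Fml.dia (prefNegConj f j (Fml.ag i (f j)))) n'

/-- The n-choice axiom `APC_n^i` for `n = n' + 1` choices `φ_0, …, φ_{n'}`. -/
def apcAx {m : ℕ} (i : Fin m) (f : ℕ → Fml m) (n' : ℕ) : Fml m :=
  (apcAnte i f n').impF (disjUpTo f n')

def diaAgIdx {m : ℕ} (f : Fin m → Fml m) (j : ℕ) : Fml m :=
  if h : j < m then Fml.dia (Fml.ag ⟨j, h⟩ (f ⟨j, h⟩)) else Fml.pos 0

def agIdx {m : ℕ} (f : Fin m → Fml m) (j : ℕ) : Fml m :=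
  if h : j < m then Fml.ag ⟨j, h⟩ (f ⟨j, h⟩) else Fml.pos 0

/-- The independence-of-agents axiom `⋀_{i∈Ag} ◇[i]φ_i → ◇(⋀_{i∈Ag} [i]φ_i)`
(for `m ≥ 1` agents). -/
def ioaAx {m : ℕ} (f : Fin m → Fml m) : Fml m :=
  (conjUpTo (diaAgIdx f) (m-1)).impF (Fml.dia (conjUpTo (agIdx f) (m-1)))

/-- An `Ldm_n^m`-model on the carrier `W`: each `rel i` is an equivalence relation (C1),
independence of agents (C2), the `n`-choice condition when `n > 0` (C3), plus a valuation. -/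
structure ModelOn (n m : ℕ) (W : Type) : Type where
  nonemp : Nonempty W
  rel : Fin m → W → W → Prop
  refl : ∀ i w, rel i w w
  symm : ∀ i w u, rel i w u → rel i u w
  trans : ∀ i w u v, rel i w u → rel i u v → rel i w v
  ioa : ∀ u : Fin m → W, ∃ v, ∀ i, rel i (u i) v
  apc : 0 < n → ∀ (i : Fin m) (w : Fin (n+1) → W),
      ∃ k j : Fin (n+1), k < j ∧ rel i (w k) (w j)
  val : ℕ → Set W

/-- Satisfaction `M, w ⊩ φ`. -/
def Sat {n m : ℕ} {W : Type} (M : ModelOn n m W) : W → Fml m → Prop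
  | w, .pos p => w ∈ M.val p
  | w, .neg p => w ∉ M.val p
  | w, .and φ ψ => Sat M w φ ∧ Sat M w ψ
  | w, .or φ ψ => Sat M w φ ∨ Sat M w ψ
  | _, .box φ => ∀ u, Sat M u φ
  | _, .dia φ => ∃ u, Sat M u φ
  | w, .ag i φ => ∀ u, M.rel i w u → Sat M u φ
  | w, .dag i φ => ∃ u, M.rel i w u ∧ Sat M u φ

/-- Validity: `⊩ φ`. -/
def Valid (n m : ℕ) (φ : Fml m) : Prop :=
  ∀ (W : Type) (M : ModelOn n m W) (w : W), Sat M w φ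

/-- Semantic consequence `Γ ⊩ φ`. -/
def SemConseq (n m : ℕ) (Γ : Set (Fml m)) (φ : Fml m) : Prop :=
  ∀ (W : Type) (M : ModelOn n m W) (w : W), (∀ ψ ∈ Γ, Sat M w ψ) → Sat M w φ

/-- The Hilbert calculus `Ldm_n^m`: classical propositional logic, S5 for `□` and each
`[i]`, the bridge axiom, IOA, the n-choice axioms (for `n > 0`), with modus ponens and
necessitation (applied to theorems). `Hderiv n m Γ φ` is `Γ ⊢_{Ldm_n^m} φ`. -/
inductive Hderiv (n m : ℕ) : Set (Fml m) → Fml m → Prop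
  | prem {Γ} {φ} (h : φ ∈ Γ) : Hderiv n m Γ φ
  | ax1 {Γ} (φ ψ : Fml m) : Hderiv n m Γ (φ.impF (ψ.impF φ))
  | ax2 {Γ} (φ ψ χ : Fml m) :
      Hderiv n m Γ ((φ.impF (ψ.impF χ)).impF ((φ.impF ψ).impF (φ.impF χ)))
  | ax3 {Γ} (φ ψ : Fml m) :
      Hderiv n m Γ ((ψ.negF.impF φ.negF).impF (φ.impF ψ))
  | boxK {Γ} (φ ψ : Fml m) :
      Hderiv n m Γ ((Fml.box (φ.impF ψ)).impF ((Fml.box φ).impF (Fml.box ψ)))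
  | boxT {Γ} (φ : Fml m) : Hderiv n m Γ ((Fml.box φ).impF φ)
  | box5 {Γ} (φ : Fml m) : Hderiv n m Γ ((Fml.dia φ).impF (Fml.box (Fml.dia φ)))
  | boxDual {Γ} (φ : Fml m) : Hderiv n m Γ (Fml.or (Fml.box φ) (Fml.dia φ.negF))
  | agK {Γ} (i : Fin m) (φ ψ : Fml m) :
      Hderiv n m Γ ((Fml.ag i (φ.impF ψ)).impF ((Fml.ag i φ).impF (Fml.ag i ψ)))
  | agT {Γ} (i : Fin m) (φ : Fml m) : Hderiv n m Γ ((Fml.ag i φ).impF φ)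
  | ag5 {Γ} (i : Fin m) (φ : Fml m) :
      Hderiv n m Γ ((Fml.dag i φ).impF (Fml.ag i (Fml.dag i φ)))
  | agDual {Γ} (i : Fin m) (φ : Fml m) :
      Hderiv n m Γ (Fml.or (Fml.ag i φ) (Fml.dag i φ.negF))
  | bridge {Γ} (i : Fin m) (φ : Fml m) :
      Hderiv n m Γ ((Fml.box φ).impF (Fml.ag i φ))
  | ioa {Γ} (f : Fin m → Fml m) : Hderiv n m Γ (ioaAx f)
  | apc {Γ} (hn : 0 < n) (i : Fin m) (f : ℕ → Fml m) :
      Hderiv n m Γ (apcAx i f (n-1))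
  | mp {Γ} {φ ψ} : Hderiv n m Γ (φ.impF ψ) → Hderiv n m Γ φ → Hderiv n m Γ ψ
  | nec {Γ} {φ} : Hderiv n m ∅ φ → Hderiv n m Γ (Fml.box φ)

/-- A relational atom `R_i x y`. -/
abbrev RAtom (m : ℕ) : Type := Fin m × ℕ × ℕ
/-- The relational part of a labelled sequent: a multiset of relational atoms. -/
abbrev RAtoms (m : ℕ) : Type := Multiset (RAtom m)
/-- A labelled formula `x : φ`. -/
abbrev LFml (m : ℕ) : Type := ℕ × Fml m
/-- The formula part of a labelled sequent: a multiset of labelled formulas. -/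
abbrev LFmls (m : ℕ) : Type := Multiset (LFml m)

/-- The label `v` does not occur in the labelled sequent `R, Γ` (eigenvariable condition). -/
def freshIn {m : ℕ} (v : ℕ) (R : RAtoms m) (Γ : LFmls m) : Prop :=
  (∀ a ∈ R, a.2.1 ≠ v ∧ a.2.2 ≠ v) ∧ ∀ e ∈ Γ, e.1 ≠ v

/-- `Reach R i w u`: `u` is `i`-reachable from `w`, i.e. there is a (possibly empty)
path of `R_i`-atoms of `R` (traversed in either direction) connecting `w` to `u`. -/
inductive Reach {m : ℕ} (R : RAtoms m) (i : Fin m) : ℕ → ℕ → Prop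
  | refl (w : ℕ) : Reach R i w w
  | fwd {w u v : ℕ} : Reach R i w u → ((i, u, v) : RAtom m) ∈ R → Reach R i w v
  | bwd {w u v : ℕ} : Reach R i w u → ((i, v, u) : RAtom m) ∈ R → Reach R i w v

/-- The relational atoms `R_1 u_1 v, …, R_m u_m v` used by the rule (IOA). -/
def ioaAtoms {m : ℕ} (u : Fin m → ℕ) (v : ℕ) : RAtoms m :=
  Multiset.ofList ((List.finRange m).map fun i => ((i, u i, v) : RAtom m))

/-- Which optional rules are present in a labelled calculus, and whether the
`[i]`-rule keeps its principal formula in the premise. -/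
structure Flags : Type where
  refl : Bool    -- (refl_i)
  eucl : Bool    -- (eucl_i)
  diaAg : Bool   -- (⟨i⟩)
  pr : Bool      -- (Pr_i)
  ioa : Bool     -- (IOA)
  agKeep : Bool  -- premise of ([i]) keeps w:[i]φ

/-- `SeqH fl n m h R Γ`: the labelled sequent `R, Γ` has a derivation of height at most
`h` in the labelled calculus determined by `fl` (with parameters `n`, `m`). -/
inductive SeqH (fl : Flags) (n m : ℕ) : ℕ → RAtoms m → LFmls m → Prop
  | id {h : ℕ} {R : RAtoms m} {Γ : LFmls m} (w p : ℕ) :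
      SeqH fl n m h R ((w, Fml.pos p) ::ₘ (w, Fml.neg p) ::ₘ Γ)
  | andR {h R Γ} {w : ℕ} {φ ψ : Fml m} :
      SeqH fl n m h R ((w, Fml.and φ ψ) ::ₘ (w, φ) ::ₘ Γ) →
      SeqH fl n m h R ((w, Fml.and φ ψ) ::ₘ (w, ψ) ::ₘ Γ) →
      SeqH fl n m (h+1) R ((w, Fml.and φ ψ) ::ₘ Γ)
  | orR {h R Γ} {w : ℕ} {φ ψ : Fml m} :
      SeqH fl n m h R ((w, Fml.or φ ψ) ::ₘ (w, φ) ::ₘ (w, ψ) ::ₘ Γ) →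
      SeqH fl n m (h+1) R ((w, Fml.or φ ψ) ::ₘ Γ)
  | boxR {h R Γ} {w v : ℕ} {φ : Fml m}
      (hv : freshIn v R ((w, Fml.box φ) ::ₘ Γ)) :
      SeqH fl n m h R ((w, Fml.box φ) ::ₘ (v, φ) ::ₘ Γ) →
      SeqH fl n m (h+1) R ((w, Fml.box φ) ::ₘ Γ)
  | diaR {h R Γ} {w u : ℕ} {φ : Fml m} :
      SeqH fl n m h R ((w, Fml.dia φ) ::ₘ (u, φ) ::ₘ Γ) →
      SeqH fl n m (h+1) R ((w, Fml.dia φ) ::ₘ Γ)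
  | agR {h R Γ} {w v : ℕ} {i : Fin m} {φ : Fml m} (hfl : fl.agKeep = false)
      (hv : freshIn v R ((w, Fml.ag i φ) ::ₘ Γ)) :
      SeqH fl n m h (((i, w, v) : RAtom m) ::ₘ R) ((v, φ) ::ₘ Γ) →
      SeqH fl n m (h+1) R ((w, Fml.ag i φ) ::ₘ Γ)
  | agRKeep {h R Γ} {w v : ℕ} {i : Fin m} {φ : Fml m} (hfl : fl.agKeep = true)
      (hv : freshIn v R ((w, Fml.ag i φ) ::ₘ Γ)) :
      SeqH fl n m h (((i, w, v) : RAtom m) ::ₘ R) ((w, Fml.ag i φ) ::ₘ (v, φ) ::ₘ Γ) →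
      SeqH fl n m (h+1) R ((w, Fml.ag i φ) ::ₘ Γ)
  | dagR {h R Γ} {w u : ℕ} {i : Fin m} {φ : Fml m} (hfl : fl.diaAg = true) :
      SeqH fl n m h (((i, w, u) : RAtom m) ::ₘ R) ((w, Fml.dag i φ) ::ₘ (u, φ) ::ₘ Γ) →
      SeqH fl n m (h+1) (((i, w, u) : RAtom m) ::ₘ R) ((w, Fml.dag i φ) ::ₘ Γ)
  | reflR {h R Γ} {i : Fin m} {w : ℕ} (hfl : fl.refl = true) :
      SeqH fl n m h (((i, w, w) : RAtom m) ::ₘ R) Γ →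
      SeqH fl n m (h+1) R Γ
  | euclR {h R Γ} {i : Fin m} {w u v : ℕ} (hfl : fl.eucl = true) :
      SeqH fl n m h (((i, w, u) : RAtom m) ::ₘ ((i, w, v) : RAtom m) ::ₘ
        ((i, u, v) : RAtom m) ::ₘ R) Γ →
      SeqH fl n m (h+1) (((i, w, u) : RAtom m) ::ₘ ((i, w, v) : RAtom m) ::ₘ R) Γ
  | ioaR {h R Γ} (hfl : fl.ioa = true) (u : Fin m → ℕ) (v : ℕ) (hv : freshIn v R Γ) :
      SeqH fl n m h (ioaAtoms u v + R) Γ →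
      SeqH fl n m (h+1) R Γ
  | apcR {h R Γ} (hn : 0 < n) (i : Fin m) (w : Fin (n+1) → ℕ) :
      (∀ k j : Fin (n+1), k < j → SeqH fl n m h (((i, w k, w j) : RAtom m) ::ₘ R) Γ) →
      SeqH fl n m (h+1) R Γ
  | prR {h R Γ} {w u : ℕ} {i : Fin m} {φ : Fml m} (hfl : fl.pr = true)
      (hreach : Reach R i w u) :
      SeqH fl n m h R ((w, Fml.dag i φ) ::ₘ (u, φ) ::ₘ Γ) →
      SeqH fl n m (h+1) R ((w, Fml.dag i φ) ::ₘ Γ)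

/-- Derivability (of some height) in the labelled calculus determined by `fl`. -/
def Seq (fl : Flags) (n m : ℕ) (R : RAtoms m) (Γ : LFmls m) : Prop :=
  ∃ h, SeqH fl n m h R Γ

/-- The calculus `G3Ldm_n^m`. -/
def G3flags : Flags := ⟨true, true, true, false, true, false⟩
/-- The calculus `G3Ldm_n^m + PR`. -/
def G3PRflags : Flags := ⟨true, true, true, true, true, false⟩
/-- `G3Ldm_n^m + PR` without the rules `(refl_i)`. -/
def G3PRnoReflFlags : Flags := ⟨false, true, true, true, true, false⟩
/-- `G3Ldm_n^m + PR` without the rules `(eucl_i)`. -/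
def G3PRnoEuclFlags : Flags := ⟨true, false, true, true, true, false⟩
/-- The refined calculus `Ldm_n^m L`. -/
def LdmLflags : Flags := ⟨false, false, false, true, true, true⟩
/-- The refined single-agent calculus `Ldm_n^1 L` (no (IOA)). -/
def LdmL1flags : Flags := ⟨false, false, false, true, false, true⟩

/-- Substitution of the label `y` for the label `x`. -/
def substLab (x y v : ℕ) : ℕ := if v = x then y else v

def substR {m : ℕ} (x y : ℕ) (R : RAtoms m) : RAtoms m :=
  R.map fun a => (a.1, substLab x y a.2.1, substLab x y a.2.2)

def substF {m : ℕ} (x y : ℕ) (Γ : LFmls m) : LFmls m :=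
  Γ.map fun e => (substLab x y e.1, e.2)

/-- Height-preserving invertibility of every inference rule of the calculus given by `fl`. -/
def InvertAll (fl : Flags) (n m : ℕ) : Prop :=
  (∀ h R Γ (w : ℕ) (φ ψ : Fml m), SeqH fl n m h R ((w, Fml.and φ ψ) ::ₘ Γ) →
     SeqH fl n m h R ((w, Fml.and φ ψ) ::ₘ (w, φ) ::ₘ Γ) ∧
     SeqH fl n m h R ((w, Fml.and φ ψ) ::ₘ (w, ψ) ::ₘ Γ)) ∧
  (∀ h R Γ (w : ℕ) (φ ψ : Fml m), SeqH fl n m h R ((w, Fml.or φ ψ) ::ₘ Γ) →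
     SeqH fl n m h R ((w, Fml.or φ ψ) ::ₘ (w, φ) ::ₘ (w, ψ) ::ₘ Γ)) ∧
  (∀ h R Γ (w v : ℕ) (φ : Fml m), freshIn v R ((w, Fml.box φ) ::ₘ Γ) →
     SeqH fl n m h R ((w, Fml.box φ) ::ₘ Γ) →
     SeqH fl n m h R ((w, Fml.box φ) ::ₘ (v, φ) ::ₘ Γ)) ∧
  (∀ h R Γ (w u : ℕ) (φ : Fml m), SeqH fl n m h R ((w, Fml.dia φ) ::ₘ Γ) →
     SeqH fl n m h R ((w, Fml.dia φ) ::ₘ (u, φ) ::ₘ Γ)) ∧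
  (fl.agKeep = false → ∀ h R Γ (w v : ℕ) (i : Fin m) (φ : Fml m),
     freshIn v R ((w, Fml.ag i φ) ::ₘ Γ) →
     SeqH fl n m h R ((w, Fml.ag i φ) ::ₘ Γ) →
     SeqH fl n m h (((i, w, v) : RAtom m) ::ₘ R) ((v, φ) ::ₘ Γ)) ∧
  (fl.agKeep = true → ∀ h R Γ (w v : ℕ) (i : Fin m) (φ : Fml m),
     freshIn v R ((w, Fml.ag i φ) ::ₘ Γ) →
     SeqH fl n m h R ((w, Fml.ag i φ) ::ₘ Γ) →
     SeqH fl n m h (((i, w, v) : RAtom m) ::ₘ R) ((w, Fml.ag i φ) ::ₘ (v, φ) ::ₘ Γ)) ∧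
  (fl.diaAg = true → ∀ h R Γ (w u : ℕ) (i : Fin m) (φ : Fml m),
     SeqH fl n m h (((i, w, u) : RAtom m) ::ₘ R) ((w, Fml.dag i φ) ::ₘ Γ) →
     SeqH fl n m h (((i, w, u) : RAtom m) ::ₘ R) ((w, Fml.dag i φ) ::ₘ (u, φ) ::ₘ Γ)) ∧
  (fl.refl = true → ∀ h R Γ (i : Fin m) (w : ℕ), SeqH fl n m h R Γ →
     SeqH fl n m h (((i, w, w) : RAtom m) ::ₘ R) Γ) ∧
  (fl.eucl = true → ∀ h R Γ (i : Fin m) (w u v : ℕ),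
     SeqH fl n m h (((i, w, u) : RAtom m) ::ₘ ((i, w, v) : RAtom m) ::ₘ R) Γ →
     SeqH fl n m h (((i, w, u) : RAtom m) ::ₘ ((i, w, v) : RAtom m) ::ₘ
       ((i, u, v) : RAtom m) ::ₘ R) Γ) ∧
  (fl.ioa = true → ∀ h R Γ (u : Fin m → ℕ) (v : ℕ), freshIn v R Γ →
     SeqH fl n m h R Γ → SeqH fl n m h (ioaAtoms u v + R) Γ) ∧
  (0 < n → ∀ h R Γ (i : Fin m) (w : Fin (n+1) → ℕ) (k j : Fin (n+1)), k < j →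
     SeqH fl n m h R Γ → SeqH fl n m h (((i, w k, w j) : RAtom m) ::ₘ R) Γ) ∧
  (fl.pr = true → ∀ h R Γ (w u : ℕ) (i : Fin m) (φ : Fml m), Reach R i w u →
     SeqH fl n m h R ((w, Fml.dag i φ) ::ₘ Γ) →
     SeqH fl n m h R ((w, Fml.dag i φ) ::ₘ (u, φ) ::ₘ Γ))

/-- A labelled sequent `R, Γ` is satisfied in `M` under the interpretation `I`. -/
def SeqSat {n m : ℕ} {W : Type} (M : ModelOn n m W) (I : ℕ → W)
    (R : RAtoms m) (Γ : LFmls m) : Prop :=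
  (∀ a ∈ R, M.rel a.1 (I a.2.1) (I a.2.2)) → ∃ e ∈ Γ, Sat M (I e.1) e.2

/-- A labelled sequent is valid: satisfied in every model under every interpretation. -/
def SeqValid (n m : ℕ) (R : RAtoms m) (Γ : LFmls m) : Prop :=
  ∀ (W : Type) (M : ModelOn n m W) (I : ℕ → W), SeqSat M I R Γ

section EuclElim

lemma reach_mono' {m : ℕ} {R R' : RAtoms m} (hsub : ∀ x ∈ R, x ∈ R')
    {i : Fin m} {w u : ℕ} (h : Reach R i w u) : Reach R' i w u := by
  induction h with
  | refl => exact Reach.refl _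
  | fwd _ hm ih => exact Reach.fwd ih (hsub _ hm)
  | bwd _ hm ih => exact Reach.bwd ih (hsub _ hm)

lemma reach_trans' {m : ℕ} {R : RAtoms m} {i : Fin m} {w u v : ℕ}
    (h1 : Reach R i w u) (h2 : Reach R i u v) : Reach R i w v := by
  induction h2 with
  | refl => exact h1
  | fwd _ hm ih => exact Reach.fwd ih hm
  | bwd _ hm ih => exact Reach.bwd ih hm

lemma reach_symm' {m : ℕ} {R : RAtoms m} {i : Fin m} {w u : ℕ}
    (h : Reach R i w u) : Reach R i u w := by
  induction h with
  | refl => exact Reach.refl _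
  | fwd _ hm ih => exact reach_trans' (Reach.bwd (Reach.refl _) hm) ih
  | bwd _ hm ih => exact reach_trans' (Reach.fwd (Reach.refl _) hm) ih

lemma reach_remove' {m : ℕ} {R₀ : RAtoms m} {i : Fin m} {a b : ℕ}
    (hab : Reach R₀ i a b) {j : Fin m} {w u : ℕ}
    (h : Reach (((i, a, b) : RAtom m) ::ₘ R₀) j w u) : Reach R₀ j w u := by
  induction h with
  | refl => exact Reach.refl _
  | fwd _ hm ih =>
    rcases Multiset.mem_cons.1 hm with he | hm'
    · simp only [Prod.mk.injEq] at he
      obtain ⟨rfl, rfl, rfl⟩ := he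
      exact reach_trans' ih hab
    · exact Reach.fwd ih hm'
  | bwd _ hm ih =>
    rcases Multiset.mem_cons.1 hm with he | hm'
    · simp only [Prod.mk.injEq] at he
      obtain ⟨rfl, rfl, rfl⟩ := he
      exact reach_trans' ih (reach_symm' hab)
    · exact Reach.bwd ih hm'

lemma fresh_mono' {m : ℕ} {v : ℕ} {R R' : RAtoms m} {Γ : LFmls m}
    (hsub : ∀ x ∈ R', x ∈ R) (h : freshIn v R Γ) : freshIn v R' Γ :=
  ⟨fun a ha => h.1 a (hsub a ha), h.2⟩

lemma heightSucc' {fl : Flags} {n m h : ℕ} {R : RAtoms m} {Γ : LFmls m}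
    (hd : SeqH fl n m h R Γ) : SeqH fl n m (h + 1) R Γ := by
  induction hd with
  | id w p => exact SeqH.id w p
  | andR _ _ ih1 ih2 => exact SeqH.andR ih1 ih2
  | orR _ ih => exact SeqH.orR ih
  | boxR hv _ ih => exact SeqH.boxR hv ih
  | diaR _ ih => exact SeqH.diaR ih
  | agR hfl hv _ ih => exact SeqH.agR hfl hv ih
  | agRKeep hfl hv _ ih => exact SeqH.agRKeep hfl hv ih
  | dagR hfl _ ih => exact SeqH.dagR hfl ih
  | reflR hfl _ ih => exact SeqH.reflR hfl ih
  | euclR hfl _ ih => exact SeqH.euclR hfl ih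
  | ioaR hfl u v hv _ ih => exact SeqH.ioaR hfl u v hv ih
  | apcR hn i w _ ih => exact SeqH.apcR hn i w ih
  | prR hfl hreach _ ih => exact SeqH.prR hfl hreach ih

lemma delete_atom' {n m : ℕ} {h : ℕ} {R : RAtoms m} {Γ : LFmls m}
    (hd : SeqH G3PRnoEuclFlags n m h R Γ) :
    ∀ {j : Fin m} {a b : ℕ} {R₀ : RAtoms m}, R = ((j, a, b) : RAtom m) ::ₘ R₀ →
      Reach R₀ j a b → SeqH G3PRnoEuclFlags n m h R₀ Γ := by
  induction hd with
  | id w p => intro j a b R₀ hR hr; exact SeqH.id w p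
  | andR _ _ ih1 ih2 =>
    intro j a b R₀ hR hr; exact SeqH.andR (ih1 hR hr) (ih2 hR hr)
  | orR _ ih => intro j a b R₀ hR hr; exact SeqH.orR (ih hR hr)
  | boxR hv _ ih =>
    intro j a b R₀ hR hr; subst hR
    exact SeqH.boxR (fresh_mono' (fun x hx => Multiset.mem_cons_of_mem hx) hv) (ih rfl hr)
  | diaR _ ih => intro j a b R₀ hR hr; exact SeqH.diaR (ih hR hr)
  | agR hfl hv _ ih =>
    intro j a b R₀ hR hr; subst hR
    refine SeqH.agR hfl (fresh_mono' (fun x hx => Multiset.mem_cons_of_mem hx) hv) ?_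
    exact ih (Multiset.cons_swap _ _ _)
      (reach_mono' (fun x hx => Multiset.mem_cons_of_mem hx) hr)
  | agRKeep hfl _ _ _ => simp [G3PRnoEuclFlags] at hfl
  | dagR hfl _ ih =>
    intro j a b R₀ hR hr
    rcases Multiset.cons_eq_cons.1 hR with ⟨he, hrest⟩ | ⟨_, cs, h1, h2⟩
    · simp only [Prod.mk.injEq] at he
      obtain ⟨rfl, rfl, rfl⟩ := he
      subst hrest
      exact SeqH.prR rfl hr (ih rfl hr)
    · subst h1; subst h2
      exact SeqH.dagR hfl (ih (Multiset.cons_swap _ _ _) hr)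
  | reflR hfl _ ih =>
    intro j a b R₀ hR hr; subst hR
    exact SeqH.reflR hfl (ih (Multiset.cons_swap _ _ _)
      (reach_mono' (fun x hx => Multiset.mem_cons_of_mem hx) hr))
  | euclR hfl _ _ => simp [G3PRnoEuclFlags] at hfl
  | ioaR hfl u v hv _ ih =>
    intro j a b R₀ hR hr; subst hR
    refine SeqH.ioaR hfl u v ⟨fun x hx => hv.1 x (Multiset.mem_cons_of_mem hx), hv.2⟩ ?_
    refine ih ?_ (reach_mono' (fun x hx => Multiset.mem_add.2 (Or.inr hx)) hr)
    rw [Multiset.add_cons]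
  | apcR hn i w _ ih =>
    intro j a b R₀ hR hr; subst hR
    exact SeqH.apcR hn i w fun k j' hk =>
      ih k j' hk (Multiset.cons_swap _ _ _)
        (reach_mono' (fun x hx => Multiset.mem_cons_of_mem hx) hr)
  | prR hfl hreach _ ih =>
    intro j a b R₀ hR hr; subst hR
    exact SeqH.prR hfl (reach_remove' hr hreach) (ih rfl hr)

lemma toNoEucl' {n m h : ℕ} {R : RAtoms m} {Γ : LFmls m}
    (hd : SeqH G3PRflags n m h R Γ) : SeqH G3PRnoEuclFlags n m h R Γ := by
  induction hd with
  | id w p => exact SeqH.id w p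
  | andR _ _ ih1 ih2 => exact SeqH.andR ih1 ih2
  | orR _ ih => exact SeqH.orR ih
  | boxR hv _ ih => exact SeqH.boxR hv ih
  | diaR _ ih => exact SeqH.diaR ih
  | agR _ hv _ ih => exact SeqH.agR rfl hv ih
  | agRKeep hfl _ _ _ => simp [G3PRflags] at hfl
  | dagR _ _ ih => exact SeqH.dagR rfl ih
  | reflR _ _ ih => exact SeqH.reflR rfl ih
  | @euclR h R Γ i w u v _ _ ih =>
    refine heightSucc' (delete_atom' ih (j := i) (a := u) (b := v) (R₀ := ((i, w, u) : RAtom m) ::ₘ ((i, w, v) : RAtom m) ::ₘ R) ?_ ?_)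
    · rw [Multiset.cons_swap ((i, w, v) : RAtom m) ((i, u, v) : RAtom m),
        Multiset.cons_swap ((i, w, u) : RAtom m) ((i, u, v) : RAtom m)]
    · exact Reach.fwd
        (Reach.bwd (Reach.refl u) (Multiset.mem_cons_self _ _))
        (Multiset.mem_cons_of_mem (Multiset.mem_cons_self _ _))
  | ioaR _ u v hv _ ih => exact SeqH.ioaR rfl u v hv ih
  | apcR hn i w _ ih => exact SeqH.apcR hn i w ih
  | prR _ hreach _ ih => exact SeqH.prR rfl hreach ih

end EuclElim

/-- `(eucl_i)`-elimination: every sequent derivable in `G3Ldm_n^m + PR`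
is derivable in `G3Ldm_n^m + PR` without any use of the rules `(eucl_i)`. -/
theorem eucl_elimination (n m : ℕ) (hm : 1 ≤ m)
    (R : RAtoms m) (Γ : LFmls m)
    (hd : Seq G3PRflags n m R Γ) :
    Seq G3PRnoEuclFlags n m R Γ := by
  obtain ⟨h, hd⟩ := hd
  exact ⟨h, toNoEucl' hd⟩

end Stit
end

section
/- Soundness of Ldm_n^m L: every labelled sequent derivable in the calculus Ldm_n^m L is valid, i.e., is satisfied in every Ldm_n^m-model under every interpretation of the labels. In particular, if x:φ is derivable in Ldm_n^m L then φ is valid on all Ldm_n^m-models. -/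
namespace Stit

private lemma reach_rel {n m : ℕ} {W : Type} (M : ModelOn n m W) (I : ℕ → W)
    {R : RAtoms m} {i : Fin m}
    (hR : ∀ a ∈ R, M.rel a.1 (I a.2.1) (I a.2.2)) :
    ∀ {w u : ℕ}, Reach R i w u → M.rel i (I w) (I u) := by
  intro w u h
  induction h with
  | refl => exact M.refl _ _
  | fwd _ hmem ih => exact M.trans _ _ _ _ ih (hR _ hmem)
  | bwd _ hmem ih => exact M.trans _ _ _ _ ih (M.symm _ _ _ (hR _ hmem))

private lemma seq_sound {fl : Flags} {n m : ℕ} :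
    ∀ {h : ℕ} {R : RAtoms m} {Γ : LFmls m}, SeqH fl n m h R Γ → SeqValid n m R Γ := by
  intro h R Γ hd
  induction hd with
  | @id h R Γ w p =>
    intro W M I hR
    by_cases hp : I w ∈ M.val p
    · exact ⟨(w, Fml.pos p), Multiset.mem_cons_self _ _, hp⟩
    · exact ⟨(w, Fml.neg p),
        Multiset.mem_cons_of_mem (Multiset.mem_cons_self _ _), hp⟩
  | @andR h R Γ w φ ψ _ _ ih1 ih2 =>
    intro W M I hR
    by_contra hno; push_neg at hno
    obtain ⟨e1, he1, hs1⟩ := ih1 W M I hR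
    rcases Multiset.mem_cons.1 he1 with rfl | he1'
    · exact hno _ (Multiset.mem_cons_self _ _) hs1
    rcases Multiset.mem_cons.1 he1' with rfl | he1''
    · obtain ⟨e2, he2, hs2⟩ := ih2 W M I hR
      rcases Multiset.mem_cons.1 he2 with rfl | he2'
      · exact hno _ (Multiset.mem_cons_self _ _) hs2
      rcases Multiset.mem_cons.1 he2' with rfl | he2''
      · exact hno _ (Multiset.mem_cons_self _ _)
          (show Sat M (I w) (Fml.and φ ψ) from ⟨hs1, hs2⟩)
      · exact hno _ (Multiset.mem_cons_of_mem he2'') hs2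
    · exact hno _ (Multiset.mem_cons_of_mem he1'') hs1
  | @orR h R Γ w φ ψ _ ih =>
    intro W M I hR
    obtain ⟨e, he, hs⟩ := ih W M I hR
    rcases Multiset.mem_cons.1 he with rfl | he'
    · exact ⟨_, Multiset.mem_cons_self _ _, hs⟩
    rcases Multiset.mem_cons.1 he' with rfl | he''
    · exact ⟨(w, Fml.or φ ψ), Multiset.mem_cons_self _ _,
        show Sat M (I w) (Fml.or φ ψ) from Or.inl hs⟩
    rcases Multiset.mem_cons.1 he'' with rfl | he'''
    · exact ⟨(w, Fml.or φ ψ), Multiset.mem_cons_self _ _,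
        show Sat M (I w) (Fml.or φ ψ) from Or.inr hs⟩
    · exact ⟨e, Multiset.mem_cons_of_mem he''', hs⟩
  | @boxR h R Γ w v φ hv _ ih =>
    intro W M I hR
    by_contra hno; push_neg at hno
    have hbox : ¬ Sat M (I w) (Fml.box φ) := hno _ (Multiset.mem_cons_self _ _)
    simp only [Sat] at hbox; push_neg at hbox
    obtain ⟨u, hu⟩ := hbox
    set I' : ℕ → W := fun x => if x = v then u else I x with hI'
    have hR' : ∀ a ∈ R, M.rel a.1 (I' a.2.1) (I' a.2.2) := by
      intro a ha
      obtain ⟨h1, h2⟩ := hv.1 a ha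
      simp only [hI', if_neg h1, if_neg h2]
      exact hR a ha
    obtain ⟨e, he, hs⟩ := ih W M I' hR'
    rcases Multiset.mem_cons.1 he with rfl | he'
    · exact hno _ (Multiset.mem_cons_self _ _)
        (show Sat M (I w) (Fml.box φ) from hs)
    rcases Multiset.mem_cons.1 he' with rfl | he''
    · have hIv : I' v = u := by simp [hI']
      exact hu (hIv ▸ hs)
    · have hne : e.1 ≠ v := hv.2 e (Multiset.mem_cons_of_mem he'')
      have : I' e.1 = I e.1 := by simp [hI', if_neg hne]
      exact hno _ (Multiset.mem_cons_of_mem he'') (this ▸ hs)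
  | @diaR h R Γ w u φ _ ih =>
    intro W M I hR
    obtain ⟨e, he, hs⟩ := ih W M I hR
    rcases Multiset.mem_cons.1 he with rfl | he'
    · exact ⟨_, Multiset.mem_cons_self _ _, hs⟩
    rcases Multiset.mem_cons.1 he' with rfl | he''
    · exact ⟨(w, Fml.dia φ), Multiset.mem_cons_self _ _,
        show Sat M (I w) (Fml.dia φ) from ⟨I u, hs⟩⟩
    · exact ⟨e, Multiset.mem_cons_of_mem he'', hs⟩
  | @agR h R Γ w v i φ hfl hv _ ih =>
    intro W M I hR
    by_contra hno; push_neg at hno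
    have hag : ¬ Sat M (I w) (Fml.ag i φ) := hno _ (Multiset.mem_cons_self _ _)
    simp only [Sat] at hag; push_neg at hag
    obtain ⟨u, hrel, hu⟩ := hag
    have hwv : w ≠ v := hv.2 (w, Fml.ag i φ) (Multiset.mem_cons_self _ _)
    set I' : ℕ → W := fun x => if x = v then u else I x with hI'
    have hR' : ∀ a ∈ (((i, w, v) : RAtom m) ::ₘ R),
        M.rel a.1 (I' a.2.1) (I' a.2.2) := by
      intro a ha
      rcases Multiset.mem_cons.1 ha with rfl | ha'
      · simpa [hI', if_neg hwv] using hrel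
      · obtain ⟨h1, h2⟩ := hv.1 a ha'
        simp only [hI', if_neg h1, if_neg h2]
        exact hR a ha'
    obtain ⟨e, he, hs⟩ := ih W M I' hR'
    rcases Multiset.mem_cons.1 he with rfl | he'
    · have : I' v = u := by simp [hI']
      exact hu (this ▸ hs)
    · have hne : e.1 ≠ v := hv.2 e (Multiset.mem_cons_of_mem he')
      have : I' e.1 = I e.1 := by simp [hI', if_neg hne]
      exact hno _ (Multiset.mem_cons_of_mem he') (this ▸ hs)
  | @agRKeep h R Γ w v i φ hfl hv _ ih =>
    intro W M I hR
    by_contra hno; push_neg at hno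
    have hag : ¬ Sat M (I w) (Fml.ag i φ) := hno _ (Multiset.mem_cons_self _ _)
    simp only [Sat] at hag; push_neg at hag
    obtain ⟨u, hrel, hu⟩ := hag
    have hwv : w ≠ v := hv.2 (w, Fml.ag i φ) (Multiset.mem_cons_self _ _)
    set I' : ℕ → W := fun x => if x = v then u else I x with hI'
    have hR' : ∀ a ∈ (((i, w, v) : RAtom m) ::ₘ R),
        M.rel a.1 (I' a.2.1) (I' a.2.2) := by
      intro a ha
      rcases Multiset.mem_cons.1 ha with rfl | ha'
      · simpa [hI', if_neg hwv] using hrel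
      · obtain ⟨h1, h2⟩ := hv.1 a ha'
        simp only [hI', if_neg h1, if_neg h2]
        exact hR a ha'
    obtain ⟨e, he, hs⟩ := ih W M I' hR'
    rcases Multiset.mem_cons.1 he with rfl | he'
    · have : I' w = I w := by simp [hI', if_neg hwv]
      exact hno _ (Multiset.mem_cons_self _ _) (this ▸ hs)
    rcases Multiset.mem_cons.1 he' with rfl | he''
    · have : I' v = u := by simp [hI']
      exact hu (this ▸ hs)
    · have hne : e.1 ≠ v := hv.2 e (Multiset.mem_cons_of_mem he'')
      have : I' e.1 = I e.1 := by simp [hI', if_neg hne]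
      exact hno _ (Multiset.mem_cons_of_mem he'') (this ▸ hs)
  | @dagR h R Γ w u i φ hfl _ ih =>
    intro W M I hR
    obtain ⟨e, he, hs⟩ := ih W M I hR
    rcases Multiset.mem_cons.1 he with rfl | he'
    · exact ⟨_, Multiset.mem_cons_self _ _, hs⟩
    rcases Multiset.mem_cons.1 he' with rfl | he''
    · exact ⟨(w, Fml.dag i φ), Multiset.mem_cons_self _ _,
        show Sat M (I w) (Fml.dag i φ) from
          ⟨I u, hR ((i, w, u) : RAtom m) (Multiset.mem_cons_self _ _), hs⟩⟩
    · exact ⟨e, Multiset.mem_cons_of_mem he'', hs⟩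
  | @reflR h R Γ i w hfl _ ih =>
    intro W M I hR
    apply ih W M I
    intro a ha
    rcases Multiset.mem_cons.1 ha with rfl | ha'
    · exact M.refl i (I w)
    · exact hR a ha'
  | @euclR h R Γ i w u v hfl _ ih =>
    intro W M I hR
    have h1 : M.rel i (I w) (I u) := hR _ (Multiset.mem_cons_self _ _)
    have h2 : M.rel i (I w) (I v) :=
      hR _ (Multiset.mem_cons_of_mem (Multiset.mem_cons_self _ _))
    apply ih W M I
    intro a ha
    rcases Multiset.mem_cons.1 ha with rfl | ha'
    · exact h1
    rcases Multiset.mem_cons.1 ha' with rfl | ha''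
    · exact h2
    rcases Multiset.mem_cons.1 ha'' with rfl | ha'''
    · exact M.trans _ _ _ _ (M.symm _ _ _ h1) h2
    · exact hR a (Multiset.mem_cons_of_mem (Multiset.mem_cons_of_mem ha'''))
  | @ioaR h R Γ hfl u v hv _ ih =>
    intro W M I hR
    obtain ⟨z, hz⟩ := M.ioa (fun i => I (u i))
    set I' : ℕ → W := fun x => if x = v then z else I x with hI'
    have hR' : ∀ a ∈ ioaAtoms u v + R, M.rel a.1 (I' a.2.1) (I' a.2.2) := by
      intro a ha
      rcases Multiset.mem_add.1 ha with ha' | ha'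
      · simp only [ioaAtoms, Multiset.mem_coe, List.mem_map, List.mem_finRange,
          true_and] at ha'
        obtain ⟨i, rfl⟩ := ha'
        simp only [hI']
        by_cases hui : u i = v
        · simp only [if_pos hui, if_pos rfl]
          exact M.refl i z
        · simp only [if_neg hui, if_pos rfl]
          exact hz i
      · obtain ⟨h1, h2⟩ := hv.1 a ha'
        simp only [hI', if_neg h1, if_neg h2]
        exact hR a ha'
    obtain ⟨e, he, hs⟩ := ih W M I' hR'
    have hne : e.1 ≠ v := hv.2 e he
    have : I' e.1 = I e.1 := by simp [hI', if_neg hne]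
    exact ⟨e, he, this ▸ hs⟩
  | @apcR h R Γ hn i w _ ih =>
    intro W M I hR
    obtain ⟨k, j, hkj, hrel⟩ := M.apc hn i (fun t => I (w t))
    apply ih k j hkj W M I
    intro a ha
    rcases Multiset.mem_cons.1 ha with rfl | ha'
    · exact hrel
    · exact hR a ha'
  | @prR h R Γ w u i φ hfl hreach _ ih =>
    intro W M I hR
    obtain ⟨e, he, hs⟩ := ih W M I hR
    rcases Multiset.mem_cons.1 he with rfl | he'
    · exact ⟨_, Multiset.mem_cons_self _ _, hs⟩
    rcases Multiset.mem_cons.1 he' with rfl | he''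
    · exact ⟨(w, Fml.dag i φ), Multiset.mem_cons_self _ _,
        show Sat M (I w) (Fml.dag i φ) from ⟨I u, reach_rel M I hR hreach, hs⟩⟩
    · exact ⟨e, Multiset.mem_cons_of_mem he'', hs⟩

/-- Soundness of `Ldm_n^m L`: every derivable labelled sequent is valid;
in particular, if `x:φ` is derivable then `φ` is valid on all `Ldm_n^m`-models. -/
theorem ldmL_soundness (n m : ℕ) (hm : 1 ≤ m) :
    (∀ (R : RAtoms m) (Γ : LFmls m), Seq LdmLflags n m R Γ → SeqValid n m R Γ) ∧
    (∀ (φ : Fml m) (x : ℕ), Seq LdmLflags n m 0 {(x, φ)} → Valid n m φ) := by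
  constructor
  · rintro R Γ ⟨h, hd⟩
    exact seq_sound hd
  · rintro φ x ⟨h, hd⟩ W M w
    obtain ⟨e, he, hs⟩ := seq_sound hd W M (fun _ => w)
      (fun a ha => absurd ha (Multiset.notMem_zero a))
    rw [Multiset.mem_singleton] at he
    subst he
    exact hs

end Stit
end

section
/- Counter-model extraction from stable sequents (single-agent case): let m = 1, n ∈ ℕ, and let Λ be a stable forestlike labelled sequent. Define M = (W, R_1, V) by W = Lab(Λ) (the set of labels occurring in Λ), R_1 uv iff v is 1-reachable from u in Λ, and u ∈ V(p) iff u:p̄ ∈ Λ. Then M is a finite Ldm_n^1-model, and for every labelled formula u:ψ ∈ Λ we have M, u ⊮ ψ; consequently Λ is not a valid sequent. -/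
namespace Stit

/-- The edge relation of the graph of a single-agent labelled sequent:
`(w,u)` is an edge iff `R_1 wu` occurs among the relational atoms. -/
def Edge (R : RAtoms 1) (x y : ℕ) : Prop := (((0 : Fin 1), x, y) : RAtom 1) ∈ R

/-- A single-agent sequent is forestlike iff its graph is a disjoint union of
(rooted, directed) trees: every vertex has at most one parent and there are no
directed cycles, so that from the root of each component there is exactly one
directed path to every vertex of that component. -/
def Forestlike (R : RAtoms 1) : Prop :=
  (∀ x x' y, Edge R x y → Edge R x' y → x = x') ∧
  ∀ x, ¬ Relation.TransGen (Edge R) x x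

/-- The set of labels occurring in the labelled sequent `R, Γ`. -/
def SeqLabels {m : ℕ} (R : RAtoms m) (Γ : LFmls m) : Set ℕ :=
  {x | (∃ a ∈ R, a.2.1 = x ∨ a.2.2 = x) ∨ ∃ e ∈ Γ, e.1 = x}
/-- `R, Γ` is `n`-choice consistent: its graph contains at most `n` choice-trees,
i.e. at most `n` connected components cover all labels. -/
def NChoiceConsistent (n : ℕ) (R : RAtoms 1) (Γ : LFmls 1) : Prop :=
  ∃ reps : Finset ℕ, reps.card ≤ n ∧
    ∀ x ∈ SeqLabels R Γ, ∃ r ∈ reps, Reach R 0 r x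

/-- Stability of a (forestlike) single-agent labelled sequent `R, Γ`: all labels are
saturated, `□`- and `[1]`-realized, `◇`- and `⟨1⟩`-propagated, and (for `n > 0`) the
sequent is `n`-choice consistent.  Here `CT(w)`, the choice-tree of `w`, is the set of
labels `1`-reachable from `w`. -/
structure Stable (n : ℕ) (R : RAtoms 1) (Γ : LFmls 1) : Prop where
  satNeg : ∀ (w : ℕ) (φ : Fml 1), (w, φ) ∈ Γ → (w, φ.negF) ∉ Γ
  satOr : ∀ (w : ℕ) (φ ψ : Fml 1), (w, Fml.or φ ψ) ∈ Γ → (w, φ) ∈ Γ ∧ (w, ψ) ∈ Γ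
  satAnd : ∀ (w : ℕ) (φ ψ : Fml 1), (w, Fml.and φ ψ) ∈ Γ → (w, φ) ∈ Γ ∨ (w, ψ) ∈ Γ
  boxRealized : ∀ (w : ℕ) (φ : Fml 1), (w, Fml.box φ) ∈ Γ → ∃ u, (u, φ) ∈ Γ
  agRealized : ∀ (w : ℕ) (φ : Fml 1), (w, Fml.ag 0 φ) ∈ Γ →
    ∃ u, Reach R 0 w u ∧ (u, φ) ∈ Γ
  diaPropagated : ∀ (w : ℕ) (φ : Fml 1), (w, Fml.dia φ) ∈ Γ →
    ∀ u ∈ SeqLabels R Γ, (u, φ) ∈ Γ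
  dagPropagated : ∀ (w : ℕ) (φ : Fml 1), (w, Fml.dag 0 φ) ∈ Γ →
    ∀ u, Reach R 0 w u → (u, φ) ∈ Γ
  nChoice : 0 < n → NChoiceConsistent n R Γ


theorem Reach.transR {m : ℕ} {R : RAtoms m} {i : Fin m} {a b c : ℕ}
    (h1 : Reach R i a b) (h2 : Reach R i b c) : Reach R i a c := by
  induction h2 with
  | refl => exact h1
  | fwd h hm ih => exact Reach.fwd ih hm
  | bwd h hm ih => exact Reach.bwd ih hm

theorem Reach.symmR {m : ℕ} {R : RAtoms m} {i : Fin m} {a b : ℕ}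
    (h : Reach R i a b) : Reach R i b a := by
  induction h with
  | refl => exact Reach.refl _
  | fwd h hm ih => exact Reach.transR (Reach.bwd (Reach.refl _) hm) ih
  | bwd h hm ih => exact Reach.transR (Reach.fwd (Reach.refl _) hm) ih

theorem seqLabels_finite {m : ℕ} (R : RAtoms m) (Γ : LFmls m) :
    (SeqLabels R Γ).Finite := by
  apply Set.Finite.subset (Finset.finite_toSet
    ((R.toList.map (fun a => a.2.1)).toFinset ∪ (R.toList.map (fun a => a.2.2)).toFinset
      ∪ (Γ.toList.map (fun e => e.1)).toFinset))
  rintro x (⟨a, ha, h | h⟩ | ⟨e, he, h⟩) <;>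
    simp only [Finset.coe_union, Set.mem_union, Finset.coe_sort_coe,
      List.coe_toFinset, List.mem_map, Set.mem_setOf_eq]
  · exact Or.inl (Or.inl ⟨a, Multiset.mem_toList.2 ha, h⟩)
  · exact Or.inl (Or.inr ⟨a, Multiset.mem_toList.2 ha, h⟩)
  · exact Or.inr ⟨e, Multiset.mem_toList.2 he, h⟩

theorem reach_mem_labels {R : RAtoms 1} {Γ : LFmls 1} {w u : ℕ}
    (h : Reach R 0 w u) (hw : w ∈ SeqLabels R Γ) : u ∈ SeqLabels R Γ := by
  induction h with
  | refl => exact hw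
  | fwd h hm ih => exact Or.inl ⟨_, hm, Or.inr rfl⟩
  | bwd h hm ih => exact Or.inl ⟨_, hm, Or.inl rfl⟩

/-- Counter-model extraction (single agent): from a stable forestlike
labelled sequent `Λ = R, Γ` (containing at least one label) one obtains a finite
`Ldm_n^1`-model `M` on the labels of `Λ`, whose relation `R_1` is `1`-reachability
in `Λ` and whose valuation is given by `u ∈ V(p)` iff `u:p̄ ∈ Λ`, such that every
labelled formula `u:ψ ∈ Λ` is falsified at `u`; hence `Λ` is not a valid sequent. -/
theorem countermodel_extraction (n : ℕ) (R : RAtoms 1) (Γ : LFmls 1)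
    (hforest : Forestlike R) (hstable : Stable n R Γ)
    (hne : (SeqLabels R Γ).Nonempty) :
    Finite {x : ℕ // x ∈ SeqLabels R Γ} ∧
    ∃ M : ModelOn n 1 {x : ℕ // x ∈ SeqLabels R Γ},
      M.rel = (fun _ u v => Reach R 0 u.1 v.1) ∧
      M.val = (fun p => {u : {x : ℕ // x ∈ SeqLabels R Γ} | (u.1, Fml.neg p) ∈ Γ}) ∧
      (∀ e ∈ Γ, ∀ hx : e.1 ∈ SeqLabels R Γ, ¬ Sat M ⟨e.1, hx⟩ e.2) ∧
      ¬ SeqValid n 1 R Γ := by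
  obtain ⟨x0, hx0⟩ := hne
  have hfin : (SeqLabels R Γ).Finite := seqLabels_finite R Γ
  have hapc : 0 < n → ∀ (i : Fin 1) (w : Fin (n+1) → {x : ℕ // x ∈ SeqLabels R Γ}),
      ∃ k j : Fin (n+1), k < j ∧ Reach R 0 (w k).1 (w j).1 := by
    intro hn i w
    obtain ⟨reps, hcard, hreps⟩ := hstable.nChoice hn
    have hrep : ∀ k : Fin (n+1), ∃ r ∈ reps, Reach R 0 r (w k).1 :=
      fun k => hreps _ (w k).2
    choose r hr hre using hrep
    obtain ⟨k, -, j, -, hkj, he⟩ :=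
      Finset.exists_ne_map_eq_of_card_lt_of_maps_to
        (s := (Finset.univ : Finset (Fin (n+1)))) (t := reps)
        (by simpa using Nat.lt_succ_of_le hcard) (fun k _ => hr k)
    have hj := hre j
    rw [← he] at hj
    have hreach : Reach R 0 (w k).1 (w j).1 := (hre k).symmR.transR hj
    rcases lt_or_gt_of_ne hkj with h | h
    · exact ⟨k, j, h, hreach⟩
    · exact ⟨j, k, h, hreach.symmR⟩
  let M : ModelOn n 1 {x : ℕ // x ∈ SeqLabels R Γ} := {
      nonemp := ⟨⟨x0, hx0⟩⟩
      rel := fun _ u v => Reach R 0 u.1 v.1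
      refl := fun _ w => Reach.refl _
      symm := fun _ w u h => h.symmR
      trans := fun _ w u v h1 h2 => h1.transR h2
      ioa := fun u => ⟨u 0, fun i => by
        have : i = 0 := Subsingleton.elim i 0
        subst this; exact Reach.refl _⟩
      apc := hapc
      val := fun p => {u : {x : ℕ // x ∈ SeqLabels R Γ} | (u.1, Fml.neg p) ∈ Γ} }
  have main : ∀ (ψ : Fml 1) (u : ℕ), (u, ψ) ∈ Γ → ∀ hx : u ∈ SeqLabels R Γ,
      ¬ Sat M ⟨u, hx⟩ ψ := by
      intro ψ
      induction ψ with
      | pos p =>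
        intro u h hx hs
        exact hstable.satNeg u (Fml.pos p) h hs
      | neg p =>
        intro u h hx hs
        exact hs h
      | and φ ψ ihφ ihψ =>
        intro u h hx hs
        rcases hstable.satAnd u φ ψ h with h' | h'
        · exact ihφ u h' hx hs.1
        · exact ihψ u h' hx hs.2
      | or φ ψ ihφ ihψ =>
        intro u h hx hs
        obtain ⟨h1, h2⟩ := hstable.satOr u φ ψ h
        rcases hs with hs | hs
        · exact ihφ u h1 hx hs
        · exact ihψ u h2 hx hs
      | box φ ihφ =>
        intro u h hx hs
        obtain ⟨u', h'⟩ := hstable.boxRealized u φ h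
        have hx' : u' ∈ SeqLabels R Γ := Or.inr ⟨_, h', rfl⟩
        exact ihφ u' h' hx' (hs ⟨u', hx'⟩)
      | dia φ ihφ =>
        intro u h hx hs
        obtain ⟨v, hv⟩ := hs
        exact ihφ v.1 (hstable.diaPropagated u φ h v.1 v.2) v.2 hv
      | ag i φ ihφ =>
        intro u h hx hs
        have : i = 0 := Subsingleton.elim i 0
        subst this
        obtain ⟨u', hre, h'⟩ := hstable.agRealized u φ h
        have hx' : u' ∈ SeqLabels R Γ := reach_mem_labels hre hx
        exact ihφ u' h' hx' (hs ⟨u', hx'⟩ hre)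
      | dag i φ ihφ =>
        intro u h hx hs
        have : i = 0 := Subsingleton.elim i 0
        subst this
        obtain ⟨v, hre, hv⟩ := hs
        exact ihφ v.1 (hstable.dagPropagated u φ h v.1 hre) v.2 hv
  refine ⟨hfin.to_subtype, M, rfl, rfl,
    fun e he hx => main e.2 e.1 he hx, ?_⟩
  intro hval
  classical
  have hs := hval {x : ℕ // x ∈ SeqLabels R Γ} M (fun x => if hx : x ∈ SeqLabels R Γ then
    (⟨x, hx⟩ : {x : ℕ // x ∈ SeqLabels R Γ}) else ⟨x0, hx0⟩)
  have hrel : ∀ a ∈ R, M.rel a.1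
      ((fun x => if hx : x ∈ SeqLabels R Γ then
        (⟨x, hx⟩ : {x : ℕ // x ∈ SeqLabels R Γ}) else ⟨x0, hx0⟩) a.2.1)
      ((fun x => if hx : x ∈ SeqLabels R Γ then
        (⟨x, hx⟩ : {x : ℕ // x ∈ SeqLabels R Γ}) else ⟨x0, hx0⟩) a.2.2) := by
    rintro ⟨i, x, y⟩ ha
    have : i = 0 := Subsingleton.elim i 0
    subst this
    have h1 : x ∈ SeqLabels R Γ := Or.inl ⟨_, ha, Or.inl rfl⟩
    have h2 : y ∈ SeqLabels R Γ := Or.inl ⟨_, ha, Or.inr rfl⟩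
    simp only [dif_pos h1, dif_pos h2]
    exact Reach.fwd (Reach.refl _) ha
  obtain ⟨e, he, hsat⟩ := hs hrel
  have hx : e.1 ∈ SeqLabels R Γ := Or.inr ⟨e, he, rfl⟩
  simp only at hsat
  rw [dif_pos hx] at hsat
  exact main e.2 e.1 he hx hsat


end Stit
end
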